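/- Let α > 0, c₁ > 0 and c₂, d, k₀ ∈ ℝ, and for u ≠ 0, U ≠ 0 set X = c₁·ln|u| + c₂·ln|U| + d·u·U + k₀ and f_{k₀}(u,U) = −√(c₁/(2α)) · tanh( √(α/(2c₁)) · X ). If f_{k₀}(u,U) ≠ 0, then the complex number (2α/c₁) · ( −√(c₁/(2α)) ) · tanh( √(α/(2c₁))·X + (π/2)·i ) (with tanh the complex hyperbolic tangent applied to the complex argument) is real and equals 1 / f_{k₀}(u,U). -/

import Mathlib

/-- Under the shift `k₀' = k₀ + iπ√(c₁/(2α))`, the complex quantity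
`(2α/c₁)·(−√(c₁/(2α)))·tanh(√(α/(2c₁))·X + (π/2)·i)` is real and equals
`1/f_{k₀}(u,U)`. -/
theorem stmt_7 (α c₁ c₂ d k₀ u U X fval : ℝ) (hα : 0 < α) (hc₁ : 0 < c₁)
    (hu : u ≠ 0) (hU : U ≠ 0)
    (hX : X = c₁ * Real.log |u| + c₂ * Real.log |U| + d * u * U + k₀)
    (hfval : fval = -Real.sqrt (c₁ / (2 * α)) *
      Real.tanh (Real.sqrt (α / (2 * c₁)) * X))
    (hf0 : fval ≠ 0) :
    ((2 * α / c₁ : ℝ) : ℂ) * ((-Real.sqrt (c₁ / (2 * α)) : ℝ) : ℂ) *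
        Complex.tanh (((Real.sqrt (α / (2 * c₁)) * X : ℝ) : ℂ) +
          ((Real.pi / 2 : ℝ) : ℂ) * Complex.I)
      = ((1 / fval : ℝ) : ℂ) := by
  set y : ℝ := Real.sqrt (α / (2 * c₁)) * X with hy
  set s : ℝ := Real.sqrt (c₁ / (2 * α)) with hs
  have hs2 : s * s = c₁ / (2 * α) := Real.mul_self_sqrt (by positivity)
  have hspos : 0 < s := Real.sqrt_pos.mpr (by positivity)
  have htanh : Real.tanh y ≠ 0 := by
    intro h
    apply hf0
    rw [hfval, h]; ring
  have hsinh : Real.sinh y ≠ 0 := by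
    intro h
    apply htanh
    rw [Real.tanh_eq_sinh_div_cosh, h, zero_div]
  -- compute the complex tanh
  have hkey : Complex.tanh ((y : ℂ) + ((Real.pi / 2 : ℝ) : ℂ) * Complex.I)
      = (Real.cosh y : ℂ) / (Real.sinh y : ℂ) := by
    rw [Complex.tanh_eq_sinh_div_cosh, Complex.sinh_add, Complex.cosh_add,
      Complex.sinh_mul_I, Complex.cosh_mul_I]
    have hcos : Complex.cos ((Real.pi / 2 : ℝ) : ℂ) = 0 := by
      rw [← Complex.ofReal_cos, Real.cos_pi_div_two, Complex.ofReal_zero]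
    have hsin : Complex.sin ((Real.pi / 2 : ℝ) : ℂ) = 1 := by
      rw [← Complex.ofReal_sin, Real.sin_pi_div_two, Complex.ofReal_one]
    rw [hcos, hsin, Complex.ofReal_sinh, Complex.ofReal_cosh]
    field_simp
    rw [mul_zero, zero_mul, zero_add, zero_add, mul_div_mul_right _ _ Complex.I_ne_zero]
  rw [hkey]
  have hsc : ((Real.sinh y : ℝ) : ℂ) ≠ 0 := by exact_mod_cast hsinh
  have hreal : (2 * α / c₁ : ℝ) * (-s) * (Real.cosh y / Real.sinh y) = 1 / fval := by
    have hcosh : Real.cosh y ≠ 0 := (Real.cosh_pos y).ne'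
    rw [hfval, Real.tanh_eq_sinh_div_cosh]
    field_simp
    have hs2' : 2 * α * (s * s) = c₁ := by rw [hs2]; field_simp
    linear_combination (-1 : ℝ) * hs2'
  calc ((2 * α / c₁ : ℝ) : ℂ) * ((-s : ℝ) : ℂ) * ((Real.cosh y : ℂ) / (Real.sinh y : ℂ))
      = (((2 * α / c₁ : ℝ) * (-s) * (Real.cosh y / Real.sinh y) : ℝ) : ℂ) := by
        push_cast; ring
    _ = ((1 / fval : ℝ) : ℂ) := by rw [hreal]
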